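/- Let π be an equitable partition of an r-regular graph X with s cells whose characteristic matrix A_π has eigenvalue -1 with multiplicity s-1. Then π is a dominatable partition, i.e., A_π + Iₛ is an outer product 1⃗·[a₁,...,aₛ] for some values a₁,...,aₛ. -/

import Mathlib

open SimpleGraph Finset Matrix Polynomial

lemma my_charpoly_conj {n K : Type*} [Fintype n] [DecidableEq n] [Field K]
    (P Q A : Matrix n n K) (hPQ : P * Q = 1) (hQP : Q * P = 1) :
    (P * A * Q).charpoly = A.charpoly := by
  have hmap : (P.map (Polynomial.C : K → K[X])) * (Q.map Polynomial.C) = 1 := by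
    rw [← Matrix.map_mul, hPQ]; simp [Matrix.map_one]
  have hmap' : (Q.map (Polynomial.C : K → K[X])) * (P.map Polynomial.C) = 1 := by
    rw [← Matrix.map_mul, hQP]; simp [Matrix.map_one]
  have key : charmatrix (P * A * Q) =
      P.map Polynomial.C * charmatrix A * Q.map Polynomial.C := by
    rw [charmatrix, charmatrix, mul_sub, sub_mul]
    congr 1
    · rw [← (Matrix.scalar_commute (X : K[X]) (Commute.all X) (P.map Polynomial.C)).eq, mul_assoc,
        hmap, mul_one]
    · simp only [RingHom.mapMatrix_apply, ← Matrix.map_mul]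
  rw [Matrix.charpoly, key, det_mul, det_mul, Matrix.charpoly, mul_comm, ← mul_assoc, ← det_mul,
    hmap', det_one, one_mul]

lemma my_charpoly_diagonal {n K : Type*} [Fintype n] [DecidableEq n] [Field K] (d : n → K) :
    (Matrix.diagonal d).charpoly = ∏ i, (X - Polynomial.C (d i)) := by
  have : charmatrix (Matrix.diagonal d) = Matrix.diagonal fun i => X - Polynomial.C (d i) := by
    ext i j
    by_cases h : i = j
    · subst h; simp [charmatrix_apply_eq]
    · simp [charmatrix_apply_ne _ _ _ h, Matrix.diagonal_apply_ne _ h]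
  rw [Matrix.charpoly, this, det_diagonal]

/-- `f` is an efficient `(j,k)`-dominating function on `G`:
it takes values in `{0,…,j}` and sums to `k` over every closed neighbourhood. -/
def EffDom {V : Type*} [Fintype V] (G : SimpleGraph V) [DecidableRel G.Adj]
    (j k : ℕ) (f : V → ℕ) : Prop :=
  (∀ v, f v ≤ j) ∧ ∀ v : V, f v + ∑ u ∈ G.neighborFinset v, f u = k

theorem stmt13 {V : Type*} [Fintype V] (G : SimpleGraph V) [DecidableRel G.Adj]
    (r : ℕ) (hreg : G.IsRegularOfDegree r)
    {s : ℕ} (c : V → Fin s) (hc : Function.Surjective c)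
    (B : Matrix (Fin s) (Fin s) ℕ)
    (hequit : ∀ (v : V) (l : Fin s),
      ((G.neighborFinset v).filter (fun u => c u = l)).card = B (c v) l)
    (heig : ((B.map (Nat.cast : ℕ → ℚ)).charpoly).rootMultiplicity (-1) = s - 1) :
    ∃ a : Fin s → ℚ,
      B.map (Nat.cast : ℕ → ℚ) + 1 = Matrix.of (fun _ l => a l) := by
  classical
  rcases Nat.eq_zero_or_pos s with hs | hs
  · subst hs
    exact ⟨fun l => 0, by ext i l; exact i.elim0⟩
  -- cells
  set cell : Fin s → Finset V := fun i => univ.filter (fun v => c v = i) with hcell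
  have hmemcell : ∀ {v : V} {i : Fin s}, v ∈ cell i ↔ c v = i := by
    intro v i; simp [hcell]
  have hcellpos : ∀ i, 0 < (cell i).card := by
    intro i
    obtain ⟨v, hv⟩ := hc i
    exact card_pos.mpr ⟨v, hmemcell.mpr hv⟩
  -- row sums
  have hrow : ∀ i, ∑ l, B i l = r := by
    intro i
    obtain ⟨v, rfl⟩ := hc i
    have := hreg v
    rw [← this, ← SimpleGraph.card_neighborFinset_eq_degree]
    rw [Finset.card_eq_sum_card_fiberwise (f := c) (t := univ) (fun x _ => mem_univ _)]
    exact Finset.sum_congr rfl fun l _ => (hequit v l).symm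
  -- counting B via cells
  have hBv : ∀ (v : V) (j : Fin s), B (c v) j = ∑ u ∈ cell j, if G.Adj v u then 1 else 0 := by
    intro v j
    rw [← hequit v j, ← Finset.card_filter]
    congr 1
    ext u
    simp [hcell, SimpleGraph.mem_neighborFinset, and_comm]
  -- balance condition
  have hbal : ∀ i j, (cell i).card * B i j = (cell j).card * B j i := by
    intro i j
    have h1 : ∀ (i j : Fin s), (cell i).card * B i j
        = ∑ v ∈ cell i, ∑ u ∈ cell j, if G.Adj v u then 1 else 0 := by
      intro i j
      rw [← Finset.sum_const_nat (m := B i j) (fun v hv => rfl)]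
      exact Finset.sum_congr rfl fun v hv => by
        rw [← hBv v j, hmemcell.mp hv]
    rw [h1 i j, h1 j i, Finset.sum_comm]
    refine Finset.sum_congr rfl fun u _ => Finset.sum_congr rfl fun v _ => ?_
    simp [G.adj_comm]
  -- move to the reals
  set Bq : Matrix (Fin s) (Fin s) ℚ := B.map (Nat.cast : ℕ → ℚ) with hBq
  set BR : Matrix (Fin s) (Fin s) ℝ := B.map (Nat.cast : ℕ → ℝ) with hBR
  set d : Fin s → ℝ := fun i => Real.sqrt ((cell i).card) with hd
  have hdpos : ∀ i, 0 < d i := fun i => Real.sqrt_pos.mpr (by exact_mod_cast hcellpos i)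
  have hdsq : ∀ i, d i * d i = ((cell i).card : ℝ) := fun i =>
    Real.mul_self_sqrt (by positivity)
  set D : Matrix (Fin s) (Fin s) ℝ := Matrix.diagonal d with hD
  set Dinv : Matrix (Fin s) (Fin s) ℝ := Matrix.diagonal (fun i => (d i)⁻¹) with hDinv
  have hDDinv : D * Dinv = 1 := by
    rw [hD, hDinv, diagonal_mul_diagonal,
      show (fun i => d i * (d i)⁻¹) = fun _ => (1:ℝ) from funext fun i => mul_inv_cancel₀ (hdpos i).ne',
      diagonal_one]
  have hDinvD : Dinv * D = 1 := by
    rw [hD, hDinv, diagonal_mul_diagonal,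
      show (fun i => (d i)⁻¹ * d i) = fun _ => (1:ℝ) from funext fun i => inv_mul_cancel₀ (hdpos i).ne',
      diagonal_one]
  set M : Matrix (Fin s) (Fin s) ℝ := D * BR * Dinv with hM
  have hMapply : ∀ i j, M i j = d i * BR i j * (d j)⁻¹ := by
    intro i j
    rw [hM, Matrix.mul_apply]
    simp [hD, hDinv, Matrix.mul_apply, Finset.sum_ite_eq, Finset.sum_ite_eq',
      Matrix.diagonal_apply, mul_ite, ite_mul]
  -- balance over ℝ
  have hbalR : ∀ i j, (d i * d i) * (BR i j) = (d j * d j) * (BR j i) := by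
    intro i j
    rw [hdsq, hdsq, hBR]
    simp only [Matrix.map_apply]
    exact_mod_cast hbal i j
  have hsym : M.IsHermitian := by
    refine Matrix.IsHermitian.ext fun i j => ?_
    rw [star_trivial, hMapply i j, hMapply j i]
    have h1 := hbalR i j
    have hi := (hdpos i).ne'
    have hj := (hdpos j).ne'
    field_simp
    linear_combination -h1
  -- characteristic polynomial facts
  have hcpM : M.charpoly = Bq.charpoly.map (algebraMap ℚ ℝ) := by
    rw [hM, my_charpoly_conj D Dinv BR hDDinv hDinvD]
    have hBRq : BR = Bq.map (algebraMap ℚ ℝ) := by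
      ext i j; simp [hBR, hBq]
    rw [hBRq, Matrix.charpoly_map]
  have hmultM : M.charpoly.rootMultiplicity (-1) = s - 1 := by
    rw [hcpM]
    have hinj : Function.Injective (algebraMap ℚ ℝ) := (algebraMap ℚ ℝ).injective
    have h1 := Polynomial.eq_rootMultiplicity_map (p := Bq.charpoly) hinj (-1 : ℚ)
    have h2 : (algebraMap ℚ ℝ) (-1) = -1 := by norm_num
    rw [h2] at h1
    exact h1.symm.trans heig
  -- spectral theorem
  set μ : Fin s → ℝ := hsym.eigenvalues with hμ
  set U : Matrix (Fin s) (Fin s) ℝ := (hsym.eigenvectorUnitary : Matrix (Fin s) (Fin s) ℝ)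
    with hU
  have hUU : U * star U = 1 := (Matrix.mem_unitaryGroup_iff).mp hsym.eigenvectorUnitary.2
  have hUU' : star U * U = 1 := (Matrix.mem_unitaryGroup_iff').mp hsym.eigenvectorUnitary.2
  have hspec : M = U * Matrix.diagonal μ * star U := by
    have := hsym.spectral_theorem
    convert this using 2
    rfl
  have hcpdiag : M.charpoly = ∏ i, (X - Polynomial.C (μ i)) := by
    rw [hspec, my_charpoly_conj U (star U) _ hUU hUU', my_charpoly_diagonal]
  -- count eigenvalues equal to -1
  have hroots : (∏ i, (X - Polynomial.C (μ i))).roots = Finset.univ.val.map μ := by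
    rw [Finset.prod_eq_multiset_prod]
    have : Finset.univ.val.map (fun i => X - Polynomial.C (μ i))
        = (Finset.univ.val.map μ).map (fun a => X - Polynomial.C a) := by
      rw [Multiset.map_map]; rfl
    rw [this, Polynomial.roots_multiset_prod_X_sub_C]
  have hcount : (Finset.univ.filter (fun i => μ i = -1)).card = s - 1 := by
    have h1 : M.charpoly.rootMultiplicity (-1) = (Finset.univ.val.map μ).count (-1) := by
      rw [← Polynomial.count_roots, hcpdiag, hroots]
    rw [hmultM, Multiset.count_map] at h1
    have h2 : (Finset.univ.filter (fun i => μ i = -1)).card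
        = (Multiset.filter (fun a => -1 = μ a) (Finset.univ : Finset (Fin s)).val).card := by
      rw [Finset.card, Finset.filter_val]
      congr 1
      exact Multiset.filter_congr (fun x _ => eq_comm)
    rw [h2, h1]
  -- rank computation
  have hrankM1 : (M + 1).rank = 1 := by
    have hM1 : M + 1 = U * Matrix.diagonal (fun i => μ i + 1) * star U := by
      have h1 : (1 : Matrix (Fin s) (Fin s) ℝ) = U * 1 * star U := by
        rw [mul_one, hUU]
      conv_lhs => rw [hspec, h1]
      rw [← add_mul, ← mul_add, ← diagonal_one, diagonal_add]
    have hdetU : IsUnit U.det := by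
      apply IsUnit.of_mul_eq_one (star U).det
      rw [← det_mul, hUU, det_one]
    have hdetU' : IsUnit (star U).det := by
      apply IsUnit.of_mul_eq_one U.det
      rw [← det_mul, hUU', det_one]
    rw [hM1, Matrix.rank_mul_eq_left_of_isUnit_det _ _ hdetU',
      Matrix.rank_mul_eq_right_of_isUnit_det _ _ hdetU, Matrix.rank_diagonal]
    rw [Fintype.card_subtype]
    have h2 := Finset.card_filter_add_card_filter_not
      (s := (Finset.univ : Finset (Fin s))) (p := fun i => μ i = -1)
    rw [hcount] at h2
    simp only [Finset.card_univ, Fintype.card_fin] at h2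
    have h3 : (Finset.univ.filter (fun i => ¬ μ i = -1)).card = 1 := by omega
    rw [← h3]
    congr 1
    ext i
    simp [eq_neg_iff_add_eq_zero]
  have hrankN : (BR + 1).rank = 1 := by
    have hNf : Dinv * (M + 1) * D = BR + 1 := by
      rw [hM,
        show Dinv * (D * BR * Dinv + 1) * D = (Dinv * D) * BR * (Dinv * D) + Dinv * D by
          noncomm_ring,
        hDinvD, one_mul, mul_one]
    have hdetD : IsUnit D.det := IsUnit.of_mul_eq_one Dinv.det (by rw [← det_mul, hDDinv, det_one])
    have hdetDinv : IsUnit Dinv.det := IsUnit.of_mul_eq_one D.det (by rw [← det_mul, hDinvD, det_one])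
    rw [← hNf, Matrix.rank_mul_eq_left_of_isUnit_det _ _ hdetD,
      Matrix.rank_mul_eq_right_of_isUnit_det _ _ hdetDinv, hrankM1]
  -- rows of BR + 1 are all equal
  set N : Matrix (Fin s) (Fin s) ℝ := BR + 1 with hN
  have hrowsumN : ∀ i, ∑ j, N i j = (r : ℝ) + 1 := by
    intro i
    rw [hN]
    simp only [Matrix.add_apply]
    rw [Finset.sum_add_distrib]
    congr 1
    · rw [hBR]
      have : ∑ j, ((B i j : ℝ)) = ((∑ j, B i j : ℕ) : ℝ) := by push_cast; rfl
      simp only [Matrix.map_apply]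
      rw [this, hrow]
    · simp [Matrix.one_apply]
  set i0 : Fin s := ⟨0, hs⟩ with hi0
  set W := LinearMap.range (Nᵀ).mulVecLin with hW
  have hWrank : Module.finrank ℝ W = 1 := by
    have : (Nᵀ).rank = 1 := by rw [Matrix.rank_transpose, hrankN]
    rw [hW, ← Matrix.rank]
    exact this
  have hrowmem : ∀ i, (fun j => N i j) ∈ W := by
    intro i
    exact ⟨Pi.single i 1, by rw [Matrix.mulVecLin_apply, Matrix.mulVec_single]; funext j; simp⟩
  have h0 : (fun j => N i0 j) ≠ 0 := by
    intro h
    have h1 := hrowsumN i0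
    rw [show (fun j => N i0 j) = 0 from h] at h1
    simp only [Pi.zero_apply, Finset.sum_const_zero] at h1
    have hpos : (0:ℝ) < (r:ℝ) + 1 := by positivity
    exact hpos.ne' h1.symm
  have hspan : (Submodule.span ℝ {(fun j => N i0 j)}) = W := by
    apply Submodule.eq_of_le_of_finrank_le
    · rw [Submodule.span_le, Set.singleton_subset_iff]; exact hrowmem i0
    · rw [hWrank, finrank_span_singleton h0]
  have hrows : ∀ i, (fun j => N i j) = (fun j => N i0 j) := by
    intro i
    have hmem : (fun j => N i j) ∈ Submodule.span ℝ {(fun j => N i0 j)} := by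
      rw [hspan]; exact hrowmem i
    obtain ⟨σ, hσ⟩ := Submodule.mem_span_singleton.mp hmem
    have hsum : σ * ((r : ℝ) + 1) = (r : ℝ) + 1 := by
      calc σ * ((r : ℝ) + 1) = σ * ∑ j, N i0 j := by rw [hrowsumN]
        _ = ∑ j, σ * N i0 j := by rw [Finset.mul_sum]
        _ = ∑ j, N i j := by
            refine Finset.sum_congr rfl fun j _ => ?_
            simpa using congrFun hσ j
        _ = (r : ℝ) + 1 := hrowsumN i
    have hr1 : ((r : ℝ) + 1) ≠ 0 := by
      have : (0:ℝ) ≤ (r:ℝ) := Nat.cast_nonneg r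
      intro hcon; linarith
    have hσ1 : σ = 1 := mul_right_cancel₀ hr1 (by rw [hsum, one_mul])
    rw [← hσ, hσ1, one_smul]
  -- conclude
  refine ⟨fun l => Bq i0 l + (1 : Matrix (Fin s) (Fin s) ℚ) i0 l, ?_⟩
  ext i l
  have hRe : N i l = N i0 l := congrFun (hrows i) l
  have hcast : ∀ (k : Fin s), ((Bq k l + (1 : Matrix (Fin s) (Fin s) ℚ) k l : ℚ) : ℝ) = N k l := by
    intro k
    rw [hN, hBq, hBR]
    push_cast [Matrix.add_apply, Matrix.one_apply, apply_ite (Rat.cast : ℚ → ℝ), Matrix.map_apply]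
    norm_num
  have : ((Bq i l + (1 : Matrix (Fin s) (Fin s) ℚ) i l : ℚ) : ℝ)
      = ((Bq i0 l + (1 : Matrix (Fin s) (Fin s) ℚ) i0 l : ℚ) : ℝ) := by
    rw [hcast, hcast, hRe]
  have hfin := Rat.cast_injective (α := ℝ) this
  simpa [Matrix.add_apply, Matrix.of_apply] using hfin
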